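/- (Common Schmidt decomposition of an r-Schmidt eigenvector and its image.) Let L be a Hermitian operator on H, let ψ = Σ_{k=1}^r λ_k e_k ⊗ f_k be a unit vector with λ_k > 0, (e_k)_{k=1}^r orthonormal in ℂ^{d_A}, (f_k)_{k=1}^r orthonormal in ℂ^{d_B}, let g := ⟨ψ, L ψ⟩, and suppose L ψ = g ψ + χ where χ is bi-orthogonal, i.e., χ lies in the span of vectors a ⊗ b with a orthogonal to e_1, …, e_r and b orthogonal to f_1, …, f_r. Then, with d = min(d_A, d_B), there exist orthonormal families (e_k)_{k=1}^{d} in ℂ^{d_A} and (f_k)_{k=1}^{d} in ℂ^{d_B} extending the given ones, and real numbers μ_1, …, μ_d with μ_k = g λ_k for 1 ≤ k ≤ r and μ_k ≥ 0 for k > r, such that L ψ = Σ_{k=1}^{d} μ_k e_k ⊗ f_k; i.e., ψ and L ψ admit Schmidt decompositions with respect to the same orthonormal product bases. -/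

import Mathlib

open scoped ComplexOrder

noncomputable section

namespace SNpaper

/-- Elementary tensor `x ⊗ y` of vectors, as a vector on the product index set. -/
def tensorVec {dA dB : ℕ} (x : Fin dA → ℂ) (y : Fin dB → ℂ) : Fin dA × Fin dB → ℂ :=
  fun p => x p.1 * y p.2

/-- `ψ` has Schmidt rank at most `r`. -/
def SchmidtRankLE {dA dB : ℕ} (r : ℕ) (ψ : Fin dA × Fin dB → ℂ) : Prop :=
  ∃ (x : Fin r → Fin dA → ℂ) (y : Fin r → Fin dB → ℂ),
    ψ = ∑ k, tensorVec (x k) (y k)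

/-- The expectation value `⟨ψ, L ψ⟩`. -/
def expVal {dA dB : ℕ} (L : Matrix (Fin dA × Fin dB) (Fin dA × Fin dB) ℂ)
    (ψ : Fin dA × Fin dB → ℂ) : ℂ :=
  dotProduct (star ψ) (L.mulVec ψ)

/-- `ψ` is a unit vector. -/
def IsUnitVec {dA dB : ℕ} (ψ : Fin dA × Fin dB → ℂ) : Prop :=
  dotProduct (star ψ) ψ = 1

/-- `f_r(L)`: the maximal expectation value of `L` on unit vectors of Schmidt rank at most `r`. -/
def fr {dA dB : ℕ} (r : ℕ) (L : Matrix (Fin dA × Fin dB) (Fin dA × Fin dB) ℂ) : ℝ :=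
  sSup { t | ∃ ψ, IsUnitVec ψ ∧ SchmidtRankLE r ψ ∧ (expVal L ψ).re = t }

/-- The rank-one projector `|ψ⟩⟨ψ|` as a matrix. -/
def projOp {n : Type*} (ψ : n → ℂ) : Matrix n n ℂ :=
  Matrix.vecMulVec ψ (star ψ)

/-- `S_r`: states of Schmidt number at most `r` (finite convex combinations of projectors
onto unit vectors of Schmidt rank at most `r`). -/
def SNle (dA dB r : ℕ) : Set (Matrix (Fin dA × Fin dB) (Fin dA × Fin dB) ℂ) :=
  { σ | ∃ (N : ℕ) (p : Fin N → ℝ) (ψ : Fin N → (Fin dA × Fin dB → ℂ)),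
      (∀ i, 0 ≤ p i) ∧ (∑ i, p i = 1) ∧
      (∀ i, IsUnitVec (ψ i)) ∧ (∀ i, SchmidtRankLE r (ψ i)) ∧
      σ = ∑ i, (p i : ℂ) • projOp (ψ i) }

/-- An orthonormal family of vectors. -/
def ONFam {n m : ℕ} (e : Fin m → Fin n → ℂ) : Prop :=
  ∀ k l, dotProduct (star (e k)) (e l) = if k = l then 1 else 0


open Matrix

private lemma dot_star_comm {n : ℕ} (x y : Fin n → ℂ) :
    star x ⬝ᵥ y = starRingEnd ℂ (star y ⬝ᵥ x) := by
  simp [dotProduct, map_sum, mul_comm]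

private lemma vecMulVec_mulVec' {m n : ℕ} (x : Fin m → ℂ) (y : Fin n → ℂ) (z : Fin n → ℂ) :
    (Matrix.vecMulVec x y) *ᵥ z = (y ⬝ᵥ z) • x := by
  funext i
  simp [Matrix.mulVec, Matrix.vecMulVec_apply, dotProduct, Finset.mul_sum, mul_comm,
    mul_assoc, mul_left_comm]

private lemma sum_mulVec'' {ι : Type*} (sf : Finset ι) {m n : ℕ}
    (A : ι → Matrix (Fin m) (Fin n) ℂ) (x : Fin n → ℂ) :
    (∑ j ∈ sf, A j) *ᵥ x = ∑ j ∈ sf, (A j) *ᵥ x := by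
  funext i
  simp only [Matrix.mulVec, dotProduct, Matrix.sum_apply, Finset.sum_mul,
    Finset.sum_apply]
  rw [Finset.sum_comm]

private lemma mulVec_sum'' {ι : Type*} (sf : Finset ι) {m n : ℕ}
    (A : Matrix (Fin m) (Fin n) ℂ) (x : ι → Fin n → ℂ) :
    A *ᵥ (∑ j ∈ sf, x j) = ∑ j ∈ sf, A *ᵥ (x j) := by
  funext i
  simp only [Matrix.mulVec, dotProduct, Finset.sum_apply, Finset.mul_sum]
  rw [Finset.sum_comm]

private lemma inner_eq_dot {n : ℕ} (x y : EuclideanSpace ℂ (Fin n)) :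
    (inner ℂ x y : ℂ) = dotProduct (star (x : Fin n → ℂ)) (y : Fin n → ℂ) := by
  simp [PiLp.inner_apply, dotProduct, RCLike.inner_apply, mul_comm]

set_option maxHeartbeats 2000000

/-- common Schmidt decomposition of an r-Schmidt eigenvector ψ and its image L ψ:
if L ψ = g ψ + χ with χ bi-orthogonal to the Schmidt vectors of ψ, then the orthonormal
families of ψ extend to full orthonormal families of size d = min(d_A,d_B) giving a Schmidt
decomposition L ψ = Σ_{k=1}^d μ_k e'_k ⊗ f'_k with μ_k = g λ_k for k ≤ r and μ_k ≥ 0 for k > r. -/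
theorem common_schmidt_decomposition (dA dB r : ℕ) (hA : 1 ≤ dA) (hB : 1 ≤ dB)
    (hr : 1 ≤ r) (hrd : r ≤ min dA dB)
    (L : Matrix (Fin dA × Fin dB) (Fin dA × Fin dB) ℂ) (hL : L.IsHermitian)
    (lam : Fin r → ℝ) (hlam : ∀ k, 0 < lam k)
    (e : Fin r → Fin dA → ℂ) (f : Fin r → Fin dB → ℂ)
    (hONe : ONFam e) (hONf : ONFam f)
    (ψ : Fin dA × Fin dB → ℂ)
    (hψ : ψ = ∑ k, (lam k : ℂ) • tensorVec (e k) (f k))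
    (hunit : IsUnitVec ψ)
    (g : ℝ) (hg : expVal L ψ = (g : ℂ))
    (χ : Fin dA × Fin dB → ℂ)
    (hbi : χ ∈ Submodule.span ℂ
      { v | ∃ (a : Fin dA → ℂ) (b : Fin dB → ℂ),
        (∀ k, dotProduct (star (e k)) a = 0) ∧
        (∀ k, dotProduct (star (f k)) b = 0) ∧ v = tensorVec a b })
    (hLψ : L.mulVec ψ = ((g : ℂ) • ψ) + χ) :
    ∃ (e' : Fin (min dA dB) → Fin dA → ℂ) (f' : Fin (min dA dB) → Fin dB → ℂ)
      (μ : Fin (min dA dB) → ℝ),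
      ONFam e' ∧ ONFam f' ∧
      (∀ k : Fin r, e' (Fin.castLE hrd k) = e k) ∧
      (∀ k : Fin r, f' (Fin.castLE hrd k) = f k) ∧
      (∀ k : Fin r, μ (Fin.castLE hrd k) = g * lam k) ∧
      (∀ k : Fin (min dA dB), r ≤ (k : ℕ) → 0 ≤ μ k) ∧
      L.mulVec ψ = ∑ k, (μ k : ℂ) • tensorVec (e' k) (f' k) := by
  classical
  -- the matrix of χ
  set M : Matrix (Fin dA) (Fin dB) ℂ := Matrix.of (fun i j => χ (i, j)) with hMdef
  -- bi-orthogonality facts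
  have key : ∀ v ∈ Submodule.span ℂ
      { v | ∃ (a : Fin dA → ℂ) (b : Fin dB → ℂ),
        (∀ k, dotProduct (star (e k)) a = 0) ∧
        (∀ k, dotProduct (star (f k)) b = 0) ∧ v = tensorVec a b },
      (∀ k, Matrix.vecMul (star (e k)) (Matrix.of fun i j => v (i, j)) = 0) ∧
      (∀ k, (Matrix.of fun i j => v (i, j)).mulVec (star (f k)) = 0) := by
    intro v hv
    induction hv using Submodule.span_induction with
    | mem x hx =>
      obtain ⟨a, b, ha, hb, rfl⟩ := hx
      constructor
      · intro k
        have h1 : star (e k) ᵥ* (Matrix.of fun i j => tensorVec a b (i, j)) =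
            fun j => (star (e k) ⬝ᵥ a) * b j := by
          funext j
          simp only [Matrix.vecMul, dotProduct, Matrix.of_apply, tensorVec,
            Finset.sum_mul, mul_assoc]
        rw [h1, ha k]
        funext j; simp
      · intro k
        have h1 : (Matrix.of fun i j => tensorVec a b (i, j)) *ᵥ star (f k) =
            fun i => a i * (star (f k) ⬝ᵥ b) := by
          funext i
          simp only [Matrix.mulVec, dotProduct, Matrix.of_apply, tensorVec,
            Finset.mul_sum]
          exact Finset.sum_congr rfl fun j _ => by ring
        rw [h1, hb k]
        funext i; simp
    | zero =>
      constructor <;> intro k <;> ext x <;>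
        simp [Matrix.vecMul, Matrix.mulVec, dotProduct]
    | add x y hx hy ihx ihy =>
      have hadd : (Matrix.of fun i j => (x + y) (i, j)) =
          (Matrix.of fun i j => x (i, j)) + (Matrix.of fun i j => y (i, j)) := rfl
      constructor
      · intro k; rw [hadd, Matrix.vecMul_add, ihx.1 k, ihy.1 k, add_zero]
      · intro k; rw [hadd, Matrix.add_mulVec, ihx.2 k, ihy.2 k, add_zero]
    | smul c x hx ihx =>
      have hsmul : (Matrix.of fun i j => (c • x) (i, j)) =
          c • (Matrix.of fun i j => x (i, j)) := rfl
      constructor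
      · intro k
        have h1 : star (e k) ᵥ* (Matrix.of fun i j => (c • x) (i, j)) =
            c • (star (e k) ᵥ* (Matrix.of fun i j => x (i, j))) := by
          funext j
          simp only [Matrix.vecMul, dotProduct, Matrix.of_apply, Pi.smul_apply,
            smul_eq_mul]
          rw [Finset.mul_sum]
          exact Finset.sum_congr rfl fun i _ => by ring
        rw [h1, ihx.1 k, smul_zero]
      · intro k; rw [hsmul, Matrix.smul_mulVec, ihx.2 k, smul_zero]
  have hMe : ∀ k, Matrix.vecMul (star (e k)) M = 0 := (key χ hbi).1
  have hMf : ∀ k, M.mulVec (star (f k)) = 0 := (key χ hbi).2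
  -- spectral decomposition of N = Mᴴ * M
  have hNpsd : (Mᴴ * M).PosSemidef := Matrix.posSemidef_conjTranspose_mul_self M
  have hNh : (Mᴴ * M).IsHermitian := hNpsd.1
  set N : Matrix (Fin dB) (Fin dB) ℂ := Mᴴ * M with hNdef
  have hNherm : Nᴴ = N := hNh
  set w : Fin dB → Fin dB → ℂ :=
    fun j => (hNh.eigenvectorBasis j : EuclideanSpace ℂ (Fin dB)) with hwdef
  set t : Fin dB → ℝ := hNh.eigenvalues with htdef
  have ht0 : ∀ j, 0 ≤ t j := fun j => hNpsd.eigenvalues_nonneg j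
  have hNw : ∀ j, N *ᵥ w j = (t j : ℂ) • w j := by
    intro j
    funext i
    have h := congrFun (hNh.mulVec_eigenvectorBasis j) i
    simpa [Complex.real_smul] using h
  have hwON : ∀ i j, star (w i) ⬝ᵥ w j = if i = j then 1 else 0 := by
    intro i j
    have h := (orthonormal_iff_ite.mp hNh.eigenvectorBasis.orthonormal) i j
    rw [inner_eq_dot] at h
    exact h
  -- interaction of M with the eigenbasis
  have hMwMw : ∀ i j, star (M *ᵥ w i) ⬝ᵥ (M *ᵥ w j) = (t j : ℂ) * if i = j then 1 else 0 := by
    intro i j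
    rw [Matrix.star_mulVec, Matrix.dotProduct_mulVec, Matrix.vecMul_vecMul,
      ← Matrix.dotProduct_mulVec, ← hNdef]
    rw [hNw j]
    rw [dotProduct_smul, hwON i j]
    simp
  have hMw0 : ∀ j, t j = 0 → M *ᵥ w j = 0 := by
    intro j hj
    have h := hMwMw j j
    rw [if_pos rfl, hj] at h
    simp only [Complex.ofReal_zero, zero_mul, mul_one] at h
    exact dotProduct_star_self_eq_zero.mp h
  have hfw : ∀ (k : Fin r) j, t j ≠ 0 → f k ⬝ᵥ w j = 0 := by
    intro k j hj
    have hNf : N *ᵥ star (f k) = 0 := by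
      rw [hNdef, ← Matrix.mulVec_mulVec, hMf k, Matrix.mulVec_zero]
    have hfN : f k ᵥ* N = 0 := by
      have h := congrArg star (Matrix.star_mulVec N (star (f k)))
      rw [hNf] at h
      simpa [hNherm] using h.symm
    have h1 : f k ⬝ᵥ (N *ᵥ w j) = 0 := by
      rw [Matrix.dotProduct_mulVec, hfN, zero_dotProduct]
    rw [hNw j, dotProduct_smul] at h1
    have : (t j : ℂ) ≠ 0 := by exact_mod_cast hj
    simpa [this] using h1
  have hew : ∀ (k : Fin r) (x : Fin dB → ℂ), star (e k) ⬝ᵥ (M *ᵥ x) = 0 := by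
    intro k x
    rw [Matrix.dotProduct_mulVec, hMe k, zero_dotProduct]
  -- singular values and vectors
  set m := Fintype.card {j : Fin dB // t j ≠ 0} with hmdef
  set q : Fin m ≃ {j : Fin dB // t j ≠ 0} :=
    (Fintype.equivFin {j : Fin dB // t j ≠ 0}).symm with hqdef
  set s : Fin m → ℝ := fun j => Real.sqrt (t (q j)) with hsdef
  have hspos : ∀ j, 0 < s j := fun j =>
    Real.sqrt_pos.mpr (lt_of_le_of_ne (ht0 _) (Ne.symm (q j).2))
  have hssq : ∀ j, s j * s j = t (q j) := fun j => Real.mul_self_sqrt (ht0 _)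
  set u : Fin m → Fin dA → ℂ := fun j => ((s j : ℂ))⁻¹ • (M *ᵥ w (q j)) with hudef
  set v : Fin m → Fin dB → ℂ := fun j => star (w (q j)) with hvdef
  have hsne : ∀ j, ((s j : ℂ)) ≠ 0 := fun j => by exact_mod_cast (hspos j).ne'
  have hMwu : ∀ j, M *ᵥ w (q j) = (s j : ℂ) • u j := by
    intro j
    simp only [hudef, smul_smul, mul_inv_cancel₀ (hsne j), one_smul]
  have hqne : ∀ {i j : Fin m}, i ≠ j → ((q i : Fin dB)) ≠ ((q j : Fin dB)) :=
    fun h hc => h (q.injective (Subtype.ext hc))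
  have huu : ∀ i j, star (u i) ⬝ᵥ u j = if i = j then 1 else 0 := by
    intro i j
    have h1 : star (u i) ⬝ᵥ u j
        = star ((s i : ℂ))⁻¹ * (((s j : ℂ))⁻¹ *
            ((t ((q j : Fin dB)) : ℂ) * if ((q i : Fin dB)) = ((q j : Fin dB)) then 1 else 0)) := by
      simp only [hudef, star_smul, smul_dotProduct, dotProduct_smul, smul_eq_mul]
      rw [hMwMw]
      ring
    have hstar : star ((s i : ℂ))⁻¹ = ((s i : ℂ))⁻¹ := by
      simp [RCLike.star_def, map_inv₀, Complex.conj_ofReal]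
    rw [h1, hstar]
    by_cases h : i = j
    · subst h
      rw [if_pos rfl, if_pos rfl]
      have hts : (t ((q i : Fin dB)) : ℂ) = (s i : ℂ) * (s i : ℂ) := by
        exact_mod_cast (hssq i).symm
      rw [hts]
      field_simp
      exact div_self (hsne i)
    · rw [if_neg (hqne h), if_neg h]
      ring
  have heu : ∀ (k : Fin r) j, star (e k) ⬝ᵥ u j = 0 := by
    intro k j
    simp only [hudef, dotProduct_smul, smul_eq_mul]
    rw [hew k (w (q j))]
    ring
  have hue : ∀ j (k : Fin r), star (u j) ⬝ᵥ e k = 0 := by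
    intro j k
    rw [dot_star_comm, heu k j, map_zero]
  have hdot_conj : ∀ {n : ℕ} (x y : Fin n → ℂ),
      star x ⬝ᵥ star y = starRingEnd ℂ (x ⬝ᵥ y) := by
    intro n x y
    simp [dotProduct, map_sum]
  have hfv : ∀ (k : Fin r) j, star (f k) ⬝ᵥ v j = 0 := by
    intro k j
    simp only [hvdef]
    rw [hdot_conj, hfw k (q j) (q j).2, map_zero]
  have hvf : ∀ j (k : Fin r), star (v j) ⬝ᵥ f k = 0 := by
    intro j k
    rw [dot_star_comm, hfv k j, map_zero]
  have hvv : ∀ i j, star (v i) ⬝ᵥ v j = if i = j then 1 else 0 := by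
    intro i j
    have h1 : star (v i) ⬝ᵥ v j = starRingEnd ℂ (star (w (q i)) ⬝ᵥ w (q j)) := by
      simp only [hvdef, star_star]
      simp [dotProduct, map_sum, mul_comm]
    rw [h1, hwON, apply_ite (starRingEnd ℂ), _root_.map_one, map_zero]
    by_cases h : i = j
    · subst h; simp
    · rw [if_neg (hqne h), if_neg h]
  -- the SVD decomposition of M
  set A : Matrix (Fin dA) (Fin dB) ℂ := ∑ j, (s j : ℂ) • Matrix.vecMulVec (u j) (v j) with hAdef
  have hAw : ∀ i, A *ᵥ w i = M *ᵥ w i := by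
    intro i
    have hAx : A *ᵥ w i = ∑ j, (s j : ℂ) • ((v j ⬝ᵥ w i) • u j) := by
      rw [hAdef, sum_mulVec'']
      exact Finset.sum_congr rfl fun j _ => by
        rw [Matrix.smul_mulVec, vecMulVec_mulVec']
    have hvw : ∀ j, v j ⬝ᵥ w i = if ((q j : Fin dB)) = i then 1 else 0 := by
      intro j
      simp only [hvdef]
      exact hwON (q j) i
    by_cases hi : t i = 0
    · have hne : ∀ j, ((q j : Fin dB)) ≠ i := fun j hc => (q j).2 (by rw [hc]; exact hi)
      rw [hAx, hMw0 i hi]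
      apply Finset.sum_eq_zero
      intro j _
      rw [hvw j, if_neg (hne j), zero_smul, smul_zero]
    · set j0 : Fin m := q.symm ⟨i, hi⟩ with hj0
      have hqj0 : ((q j0 : Fin dB)) = i := by rw [hj0, Equiv.apply_symm_apply]
      rw [hAx, Finset.sum_eq_single j0]
      · rw [hvw j0, if_pos hqj0, one_smul, ← hMwu j0, hqj0]
      · intro b _ hb
        have : ((q b : Fin dB)) ≠ i := fun hc =>
          hb (q.injective (Subtype.ext (hc.trans hqj0.symm)))
        rw [hvw b, if_neg this, zero_smul, smul_zero]
      · intro h; exact absurd (Finset.mem_univ j0) h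
  have hAM : A = M := by
    have hAMx : ∀ x : Fin dB → ℂ, A *ᵥ x = M *ᵥ x := by
      intro x
      have hx : x = ∑ i, (hNh.eigenvectorBasis.repr (WithLp.toLp 2 x) i) • w i := by
        funext l
        have := congrArg (fun z : EuclideanSpace ℂ (Fin dB) => z l)
          (hNh.eigenvectorBasis.sum_repr (WithLp.toLp 2 x))
        simpa [hwdef, Finset.sum_apply] using this.symm
      rw [hx, mulVec_sum'', mulVec_sum'']
      refine Finset.sum_congr rfl fun i _ => ?_
      rw [Matrix.mulVec_smul, Matrix.mulVec_smul, hAw i]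
    funext i l
    have h := congrFun (hAMx (Pi.single l 1)) i
    simpa using h
  -- cardinality bounds
  have horthA : Orthonormal ℂ (fun x : Fin r ⊕ Fin m =>
      (WithLp.toLp 2 (Sum.elim e u x) : EuclideanSpace ℂ (Fin dA))) := by
    rw [orthonormal_iff_ite]
    rintro (i | i) (j | j) <;> rw [inner_eq_dot] <;>
      simp only [Sum.elim_inl, Sum.elim_inr, WithLp.ofLp_toLp]
    · rw [hONe i j]; simp
    · rw [heu i j]; simp
    · rw [hue i j]; simp
    · rw [huu i j]; simp
  have horthB : Orthonormal ℂ (fun x : Fin r ⊕ Fin m =>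
      (WithLp.toLp 2 (Sum.elim f v x) : EuclideanSpace ℂ (Fin dB))) := by
    rw [orthonormal_iff_ite]
    rintro (i | i) (j | j) <;> rw [inner_eq_dot] <;>
      simp only [Sum.elim_inl, Sum.elim_inr, WithLp.ofLp_toLp]
    · rw [hONf i j]; simp
    · rw [hfv i j]; simp
    · rw [hvf i j]; simp
    · rw [hvv i j]; simp
  have hrmA : r + m ≤ dA := by
    have h := horthA.linearIndependent.fintype_card_le_finrank
    simpa [finrank_euclideanSpace_fin] using h
  have hrmB : r + m ≤ dB := by
    have h := horthB.linearIndependent.fintype_card_le_finrank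
    simpa [finrank_euclideanSpace_fin] using h
  have hrmd : r + m ≤ min dA dB := le_min hrmA hrmB
  -- extension to full orthonormal bases
  set cA : Fin dA → EuclideanSpace ℂ (Fin dA) := fun i => WithLp.toLp 2
    (if h : (i : ℕ) < r then e ⟨(i : ℕ), h⟩
    else if h' : (i : ℕ) < r + m then u ⟨(i : ℕ) - r, by omega⟩ else 0) with hcAdef
  set cB : Fin dB → EuclideanSpace ℂ (Fin dB) := fun i => WithLp.toLp 2
    (if h : (i : ℕ) < r then f ⟨(i : ℕ), h⟩
    else if h' : (i : ℕ) < r + m then v ⟨(i : ℕ) - r, by omega⟩ else 0) with hcBdef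
  set sA : Set (Fin dA) := {i | (i : ℕ) < r + m} with hsAdef
  set sB : Set (Fin dB) := {i | (i : ℕ) < r + m} with hsBdef
  have horA : Orthonormal ℂ (sA.restrict cA) := by
    rw [orthonormal_iff_ite]
    rintro ⟨i, hi⟩ ⟨j, hj⟩
    rw [inner_eq_dot]
    simp only [Set.restrict_apply, Set.restrict, hcAdef, WithLp.ofLp_toLp]
    have hival : (i : ℕ) < r + m := hi
    have hjval : (j : ℕ) < r + m := hj
    by_cases h1 : (i : ℕ) < r <;> by_cases h2 : (j : ℕ) < r
    · rw [dif_pos h1, dif_pos h2, hONe]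
      simp [Fin.ext_iff, Subtype.ext_iff]
    · rw [dif_pos h1, dif_neg h2, dif_pos hjval, heu]
      have hne : (⟨i, hi⟩ : sA) ≠ ⟨j, hj⟩ := by
        intro hc
        have hval : (i : ℕ) = (j : ℕ) := by
          have := congrArg (fun z : sA => ((z : Fin dA) : ℕ)) hc
          simpa using this
        omega
      rw [if_neg hne]
    · rw [dif_neg h1, dif_pos hival, dif_pos h2, hue]
      have hne : (⟨i, hi⟩ : sA) ≠ ⟨j, hj⟩ := by
        intro hc
        have hval : (i : ℕ) = (j : ℕ) := by
          have := congrArg (fun z : sA => ((z : Fin dA) : ℕ)) hc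
          simpa using this
        omega
      rw [if_neg hne]
    · rw [dif_neg h1, dif_pos hival, dif_neg h2, dif_pos hjval, huu]
      have hiff : ((⟨(i : ℕ) - r, by omega⟩ : Fin m) = ⟨(j : ℕ) - r, by omega⟩) ↔
          ((⟨i, hi⟩ : sA) = ⟨j, hj⟩) := by
        constructor
        · intro hc
          have h' : (i : ℕ) - r = (j : ℕ) - r := by
            simpa using congrArg Fin.val hc
          have h'' : (i : ℕ) = (j : ℕ) := by omega
          exact Subtype.ext (Fin.ext h'')
        · intro hc
          have h' : (i : ℕ) = (j : ℕ) := by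
            have := congrArg (fun z : sA => ((z : Fin dA) : ℕ)) hc
            simpa using this
          have h'' : (i : ℕ) - r = (j : ℕ) - r := by omega
          exact Fin.ext h'' 
      rw [if_congr hiff rfl rfl]
  have horB : Orthonormal ℂ (sB.restrict cB) := by
    rw [orthonormal_iff_ite]
    rintro ⟨i, hi⟩ ⟨j, hj⟩
    rw [inner_eq_dot]
    simp only [Set.restrict_apply, Set.restrict, hcBdef, WithLp.ofLp_toLp]
    have hival : (i : ℕ) < r + m := hi
    have hjval : (j : ℕ) < r + m := hj
    by_cases h1 : (i : ℕ) < r <;> by_cases h2 : (j : ℕ) < r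
    · rw [dif_pos h1, dif_pos h2, hONf]
      simp [Fin.ext_iff, Subtype.ext_iff]
    · rw [dif_pos h1, dif_neg h2, dif_pos hjval, hfv]
      have hne : (⟨i, hi⟩ : sB) ≠ ⟨j, hj⟩ := by
        intro hc
        have hval : (i : ℕ) = (j : ℕ) := by
          have := congrArg (fun z : sB => ((z : Fin dB) : ℕ)) hc
          simpa using this
        omega
      rw [if_neg hne]
    · rw [dif_neg h1, dif_pos hival, dif_pos h2, hvf]
      have hne : (⟨i, hi⟩ : sB) ≠ ⟨j, hj⟩ := by
        intro hc
        have hval : (i : ℕ) = (j : ℕ) := by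
          have := congrArg (fun z : sB => ((z : Fin dB) : ℕ)) hc
          simpa using this
        omega
      rw [if_neg hne]
    · rw [dif_neg h1, dif_pos hival, dif_neg h2, dif_pos hjval, hvv]
      have hiff : ((⟨(i : ℕ) - r, by omega⟩ : Fin m) = ⟨(j : ℕ) - r, by omega⟩) ↔
          ((⟨i, hi⟩ : sB) = ⟨j, hj⟩) := by
        constructor
        · intro hc
          have h' : (i : ℕ) - r = (j : ℕ) - r := by
            simpa using congrArg Fin.val hc
          have h'' : (i : ℕ) = (j : ℕ) := by omega
          exact Subtype.ext (Fin.ext h'')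
        · intro hc
          have h' : (i : ℕ) = (j : ℕ) := by
            have := congrArg (fun z : sB => ((z : Fin dB) : ℕ)) hc
            simpa using this
          have h'' : (i : ℕ) - r = (j : ℕ) - r := by omega
          exact Fin.ext h'' 
      rw [if_congr hiff rfl rfl]
  obtain ⟨bA, hbA⟩ := Orthonormal.exists_orthonormalBasis_extension_of_card_eq
    (by simp [finrank_euclideanSpace_fin]) horA
  obtain ⟨bB, hbB⟩ := Orthonormal.exists_orthonormalBasis_extension_of_card_eq
    (by simp [finrank_euclideanSpace_fin]) horB
  -- final data
  have hdA : min dA dB ≤ dA := min_le_left _ _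
  have hdB : min dA dB ≤ dB := min_le_right _ _
  set e' : Fin (min dA dB) → Fin dA → ℂ :=
    fun k => bA ⟨(k : ℕ), lt_of_lt_of_le k.isLt hdA⟩ with he'def
  set f' : Fin (min dA dB) → Fin dB → ℂ :=
    fun k => bB ⟨(k : ℕ), lt_of_lt_of_le k.isLt hdB⟩ with hf'def
  set μ : Fin (min dA dB) → ℝ := fun k =>
    if h : (k : ℕ) < r then g * lam ⟨(k : ℕ), h⟩
    else if h' : (k : ℕ) < r + m then s ⟨(k : ℕ) - r, by omega⟩ else 0 with hμdef
  have he'cA : ∀ (x : ℕ) (hx : x < min dA dB), x < r + m →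
      e' ⟨x, hx⟩ = cA ⟨x, lt_of_lt_of_le hx hdA⟩ := by
    intro x hx hx'
    simp only [he'def]
    exact congrArg WithLp.ofLp (hbA ⟨x, lt_of_lt_of_le hx hdA⟩ hx')
  have hf'cB : ∀ (x : ℕ) (hx : x < min dA dB), x < r + m →
      f' ⟨x, hx⟩ = cB ⟨x, lt_of_lt_of_le hx hdB⟩ := by
    intro x hx hx'
    simp only [hf'def]
    exact congrArg WithLp.ofLp (hbB ⟨x, lt_of_lt_of_le hx hdB⟩ hx')
  have he'e : ∀ (x : ℕ) (hx : x < min dA dB) (hxr : x < r), e' ⟨x, hx⟩ = e ⟨x, hxr⟩ := by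
    intro x hx hxr
    rw [he'cA x hx (by omega)]
    simp only [hcAdef, WithLp.ofLp_toLp]
    rw [dif_pos hxr]
  have hf'f : ∀ (x : ℕ) (hx : x < min dA dB) (hxr : x < r), f' ⟨x, hx⟩ = f ⟨x, hxr⟩ := by
    intro x hx hxr
    rw [hf'cB x hx (by omega)]
    simp only [hcBdef, WithLp.ofLp_toLp]
    rw [dif_pos hxr]
  have he'u : ∀ (x : ℕ) (hx : x < min dA dB) (h1 : ¬ x < r) (h2 : x < r + m),
      e' ⟨x, hx⟩ = u ⟨x - r, by omega⟩ := by
    intro x hx h1 h2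
    rw [he'cA x hx h2]
    simp only [hcAdef, WithLp.ofLp_toLp]
    rw [dif_neg h1, dif_pos h2]
  have hf'v : ∀ (x : ℕ) (hx : x < min dA dB) (h1 : ¬ x < r) (h2 : x < r + m),
      f' ⟨x, hx⟩ = v ⟨x - r, by omega⟩ := by
    intro x hx h1 h2
    rw [hf'cB x hx h2]
    simp only [hcBdef, WithLp.ofLp_toLp]
    rw [dif_neg h1, dif_pos h2]
  refine ⟨e', f', μ, ?_, ?_, ?_, ?_, ?_, ?_, ?_⟩
  · -- ONFam e'
    intro k l
    have h := (orthonormal_iff_ite.mp bA.orthonormal)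
      ⟨(k : ℕ), lt_of_lt_of_le k.isLt hdA⟩ ⟨(l : ℕ), lt_of_lt_of_le l.isLt hdA⟩
    rw [inner_eq_dot] at h
    simp only [he'def]
    rw [h]
    simp [Fin.ext_iff]
  · -- ONFam f'
    intro k l
    have h := (orthonormal_iff_ite.mp bB.orthonormal)
      ⟨(k : ℕ), lt_of_lt_of_le k.isLt hdB⟩ ⟨(l : ℕ), lt_of_lt_of_le l.isLt hdB⟩
    rw [inner_eq_dot] at h
    simp only [hf'def]
    rw [h]
    simp [Fin.ext_iff]
  · -- extends e
    intro k
    have h := he'e (k : ℕ) (lt_of_lt_of_le k.isLt hrd) k.isLt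
    have hk : Fin.castLE hrd k = ⟨(k : ℕ), lt_of_lt_of_le k.isLt hrd⟩ := rfl
    rw [hk, h]
  · -- extends f
    intro k
    have h := hf'f (k : ℕ) (lt_of_lt_of_le k.isLt hrd) k.isLt
    have hk : Fin.castLE hrd k = ⟨(k : ℕ), lt_of_lt_of_le k.isLt hrd⟩ := rfl
    rw [hk, h]
  · -- μ on the first r indices
    intro k
    simp only [hμdef]
    rw [dif_pos (show ((Fin.castLE hrd k : Fin (min dA dB)) : ℕ) < r from k.isLt)]
    congr 1
  · -- μ nonneg beyond r
    intro k hk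
    simp only [hμdef]
    rw [dif_neg (by omega)]
    by_cases h' : (k : ℕ) < r + m
    · rw [dif_pos h']
      exact Real.sqrt_nonneg _
    · rw [dif_neg h']
  · -- the Schmidt decomposition of L ψ
    rw [hLψ]
    funext p
    obtain ⟨i, l⟩ := p
    have hχ : χ (i, l) = ∑ j, (s j : ℂ) * (u j i * v j l) := by
      have h := congrFun (congrFun hAM.symm i) l
      calc χ (i, l) = M i l := rfl
        _ = A i l := h
        _ = ∑ j, (s j : ℂ) * (u j i * v j l) := by
          rw [hAdef]
          simp [Matrix.sum_apply, Matrix.vecMulVec_apply, mul_assoc]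
    have hψil : ψ (i, l) = ∑ k : Fin r, (lam k : ℂ) * (e k i * f k l) := by
      rw [hψ]
      simp [tensorVec, Finset.sum_apply, mul_assoc]
    -- the right-hand side, as a range sum
    set H : ℕ → ℂ := fun x =>
      if hx : x < min dA dB then (μ ⟨x, hx⟩ : ℂ) * (e' ⟨x, hx⟩ i * f' ⟨x, hx⟩ l)
      else 0 with hHdef
    have hRHS : (∑ k, ((μ k : ℂ) • tensorVec (e' k) (f' k))) (i, l)
        = ∑ x ∈ Finset.range (min dA dB), H x := by
      rw [← Fin.sum_univ_eq_sum_range]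
      rw [Finset.sum_apply]
      refine Finset.sum_congr rfl fun k _ => ?_
      simp only [hHdef, Pi.smul_apply, tensorVec, smul_eq_mul]
      rw [dif_pos k.isLt]
    have hHlow : ∀ x (hx : x < r),
        H x = ((g : ℂ) * (lam ⟨x, hx⟩ : ℂ)) * (e ⟨x, hx⟩ i * f ⟨x, hx⟩ l) := by
      intro x hx
      have hxd : x < min dA dB := lt_of_lt_of_le hx hrd
      simp only [hHdef]
      rw [dif_pos hxd]
      rw [he'e x hxd hx, hf'f x hxd hx]
      simp only [hμdef]
      rw [dif_pos hx]
      push_cast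
      ring
    have hHmid : ∀ x (hx : x < m),
        H (r + x) = (s ⟨x, hx⟩ : ℂ) * (u ⟨x, hx⟩ i * v ⟨x, hx⟩ l) := by
      intro x hx
      have hxd : r + x < min dA dB := lt_of_lt_of_le (by omega : r + x < r + m) hrmd
      have h1 : ¬ r + x < r := by omega
      have h2 : r + x < r + m := by omega
      simp only [hHdef]
      rw [dif_pos hxd]
      rw [he'u (r + x) hxd h1 h2, hf'v (r + x) hxd h1 h2]
      simp only [hμdef]
      rw [dif_neg h1, dif_pos h2]
      have hidx : (⟨r + x - r, by omega⟩ : Fin m) = ⟨x, hx⟩ :=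
        Fin.ext (show r + x - r = x by omega)
      rw [hidx]
    have hHtail : ∀ x ∈ Finset.Ico (r + m) (min dA dB), H x = 0 := by
      intro x hxmem
      rw [Finset.mem_Ico] at hxmem
      simp only [hHdef]
      rw [dif_pos hxmem.2]
      simp only [hμdef]
      rw [dif_neg (by omega), dif_neg (by omega)]
      simp
    -- put the pieces together
    have hsplit1 : ∑ x ∈ Finset.range (min dA dB), H x
        = (∑ x ∈ Finset.range (r + m), H x) + ∑ x ∈ Finset.Ico (r + m) (min dA dB), H x := by
      simp only [Finset.range_eq_Ico]
      exact (Finset.sum_Ico_consecutive H (Nat.zero_le _) hrmd).symm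
    have hsplit2 : ∑ x ∈ Finset.range (r + m), H x
        = (∑ x ∈ Finset.range r, H x) + ∑ x ∈ Finset.Ico r (r + m), H x := by
      simp only [Finset.range_eq_Ico]
      exact (Finset.sum_Ico_consecutive H (Nat.zero_le _) (by omega)).symm
    have hmid : ∑ x ∈ Finset.Ico r (r + m), H x
        = ∑ j : Fin m, (s j : ℂ) * (u j i * v j l) := by
      rw [Finset.sum_Ico_eq_sum_range]
      have hm : r + m - r = m := by omega
      rw [hm]
      rw [← Fin.sum_univ_eq_sum_range (fun x => H (r + x)) m]
      refine Finset.sum_congr rfl fun j _ => ?_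
      rw [hHmid (j : ℕ) j.isLt]
    have hlow : ∑ x ∈ Finset.range r, H x
        = ∑ k : Fin r, ((g : ℂ) * (lam k : ℂ)) * (e k i * f k l) := by
      rw [← Fin.sum_univ_eq_sum_range (fun x => H x) r]
      refine Finset.sum_congr rfl fun k _ => ?_
      rw [hHlow (k : ℕ) k.isLt]
    rw [hRHS, hsplit1, hsplit2, Finset.sum_eq_zero hHtail, add_zero, hmid, hlow]
    simp only [Pi.add_apply, Pi.smul_apply, smul_eq_mul]
    rw [hχ, hψil, Finset.mul_sum]
    congr 1
    refine Finset.sum_congr rfl fun k _ => ?_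
    ring


end SNpaper
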